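/- Let Ω*_0, ..., Ω*_d be integers, and suppose there exist integer sequences (a_0,...,a_d) and (b_0,...,b_{d-1}) with a_j = a_{d-j}, b_j = b_{d-1-j}, Ω*_j = a_j − b_j (setting b_d = 0), 1 = a_0 ≤ a_1 ≤ a_j for 1 ≤ j ≤ d−1, and 1 = b_0 ≤ b_1 ≤ b_j for 1 ≤ j ≤ d−2. If additionally Ω*_1 = 0, then for all 2 ≤ j ≤ ⌊d/2⌋: Ω*_{d-2} + Ω*_{d-3} + ... + Ω*_{d-j} ≥ Ω*_2 + Ω*_3 + ... + Ω*_j. -/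

import Mathlib

open Finset

/-- Corollary 4 deduction: partial-sum inequalities for the coefficients `Ω*` from the
symmetric decomposition `Ω* = a - b`. -/
theorem stmt9 (d : ℕ) (Ω a b : ℕ → ℤ)
    (hbd : b d = 0)
    (hΩ : ∀ j ≤ d, Ω j = a j - b j)
    (hasym : ∀ j ≤ d, a j = a (d - j))
    (hbsym : ∀ j ≤ d - 1, b j = b (d - 1 - j))
    (ha0 : a 0 = 1) (ha01 : a 0 ≤ a 1)
    (ha1 : ∀ j, 1 ≤ j → j ≤ d - 1 → a 1 ≤ a j)
    (hb0 : b 0 = 1) (hb01 : b 0 ≤ b 1)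
    (hb1 : ∀ j, 1 ≤ j → j ≤ d - 2 → b 1 ≤ b j)
    (hΩ1 : Ω 1 = 0) :
    ∀ j, 2 ≤ j → j ≤ d / 2 →
      ∑ i ∈ Finset.range (j - 1), Ω (2 + i) ≤
        ∑ i ∈ Finset.range (j - 1), Ω (d - 2 - i) := by
  intro j hj2 hjd
  have hd4 : 4 ≤ d := by omega
  have key : ∀ i ∈ Finset.range (j - 1),
      Ω (d - 2 - i) - Ω (2 + i) = b (1 + (i + 1)) - b (1 + i) := by
    intro i hi
    simp only [Finset.mem_range] at hi
    have hjd2 : j ≤ d / 2 := hjd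
    have h1 : Ω (2 + i) = a (2 + i) - b (2 + i) := hΩ _ (by omega)
    have h2 : Ω (d - 2 - i) = a (d - 2 - i) - b (d - 2 - i) := hΩ _ (by omega)
    have h3 : a (2 + i) = a (d - (2 + i)) := hasym _ (by omega)
    have h4 : b (1 + i) = b (d - 1 - (1 + i)) := hbsym _ (by omega)
    have e1 : d - (2 + i) = d - 2 - i := by omega
    have e2 : d - 1 - (1 + i) = d - 2 - i := by omega
    rw [e1] at h3
    rw [e2] at h4
    have e3 : 1 + (i + 1) = 2 + i := by omega
    rw [e3]
    omega
  have hsum : ∑ i ∈ Finset.range (j - 1), Ω (d - 2 - i)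
      - ∑ i ∈ Finset.range (j - 1), Ω (2 + i) = b (1 + (j - 1)) - b 1 := by
    rw [← Finset.sum_sub_distrib, Finset.sum_congr rfl key,
      Finset.sum_range_sub (fun i => b (1 + i))]
  have ej : 1 + (j - 1) = j := by omega
  rw [ej] at hsum
  have hb1j : b 1 ≤ b j := hb1 j (by omega) (by omega)
  linarith
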